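/- Let G be a finite p-group of nilpotency class c whose abelianisation G/G' is elementary abelian, and let i ≥ 1. Writing i = (j−1)p + k with j ≥ 1 and 1 ≤ k ≤ p, one has γ_i*(W(G)) = Δ^{k−1}(B(γ_j(G)))·B(γ_{j+1}(G)). In particular, γ_{jp+1}*(W(G)) = B(γ_{j+1}(G)) for every j ≥ 0, and the nilpotency class of W(G) is exactly cp. -/

import Mathlib

open Pointwise

namespace GGS
noncomputable section

variable (p : ℕ)

def shiftAut (G : Type*) [Group G] : Multiplicative (ZMod p) →* MulAut (ZMod p → G) :=
  MonoidHom.mk'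
    (fun k =>
      { toFun := fun g i => g (i + Multiplicative.toAdd k)
        invFun := fun g i => g (i - Multiplicative.toAdd k)
        left_inv := fun g => by funext i; simp
        right_inv := fun g => by funext i; simp
        map_mul' := fun g h => rfl })
    (fun k l => by
      apply MulEquiv.ext
      intro g
      funext i
      show g (i + Multiplicative.toAdd (k * l)) = g (i + Multiplicative.toAdd k + Multiplicative.toAdd l)
      rw [toAdd_mul, add_assoc])

abbrev W (G : Type*) [Group G] :=
  SemidirectProduct (ZMod p → G) (Multiplicative (ZMod p)) (shiftAut p G)

def inlW (G : Type*) [Group G] : (ZMod p → G) →* W p G := SemidirectProduct.inl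

def sigma (G : Type*) [Group G] : W p G := SemidirectProduct.inr (Multiplicative.ofAdd (1 : ZMod p))

def baseW (G : Type*) [Group G] : Subgroup (W p G) := (inlW p G).range

/-- Δ(g) = [g,σ] = g⁻¹ σ⁻¹ g σ, read off in the base group. -/
def Delta (G : Type*) [Group G] (g : ZMod p → G) : ZMod p → G :=
  ((inlW p G g)⁻¹ * (sigma p G)⁻¹ * inlW p G g * sigma p G).left

/-- γ₁* = B(G), γ_{i+1}* = [γ_i*, W(G)]; here `gammaStar n` is γ_{n+1}*. -/
def gammaStar (G : Type*) [Group G] : ℕ → Subgroup (W p G)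
  | 0 => baseW p G
  | (n + 1) => ⁅gammaStar G n, ⊤⁆

def lamG (G : Type*) [Group G] (g : G) (i : ℕ) : ZMod p → G :=
  (Delta p G)^[i - 1] (fun t => if t = 0 then g else 1)

def BSub (G : Type*) [Group G] (H : Subgroup G) : Subgroup (W p G) :=
  Subgroup.map (inlW p G) (Subgroup.pi Set.univ fun _ => H)

def inlF (F : Type*) [AddGroup F] (v : ZMod p → F) : W p (Multiplicative F) :=
  inlW p (Multiplicative F) (fun i => Multiplicative.ofAdd (v i))

def DeltaF (F : Type*) [AddGroup F] (v : ZMod p → F) : ZMod p → F :=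
  fun i => Multiplicative.toAdd (Delta p (Multiplicative F) (fun j => Multiplicative.ofAdd (v j)) i)

def lamF (F : Type*) [AddGroup F] [One F] (i : ℕ) : ZMod p → F :=
  (DeltaF p F)^[i - 1] (fun j => if j = 0 then 1 else 0)

end
end GGS

namespace GGS
open Subgroup
open scoped commutatorElement


variable {α : Type*} [Group α]

lemma comm_mul_right (a b c : α) : ⁅a, b * c⁆ = ⁅a, b⁆ * (b * ⁅a, c⁆ * b⁻¹) := by
  simp only [commutatorElement_def]; group

lemma comm_inv_right (a b : α) : ⁅a, b⁻¹⁆ = b⁻¹ * ⁅a, b⁆⁻¹ * b := by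
  simp only [commutatorElement_def]; group

lemma lcs_succ (n : ℕ) :
    Subgroup.lowerCentralSeries (⊤ : Subgroup α) (n + 1) = ⁅Subgroup.lowerCentralSeries (⊤ : Subgroup α) n, (⊤ : Subgroup α)⁆ := rfl

lemma three_subgroups {A B C N : Subgroup α} [N.Normal]
    (h1 : ⁅⁅B, C⁆, A⁆ ≤ N) (h2 : ⁅⁅C, A⁆, B⁆ ≤ N) : ⁅⁅A, B⁆, C⁆ ≤ N := by
  have keyiff : ∀ X Y Z : Subgroup α, ⁅⁅X, Y⁆, Z⁆ ≤ N ↔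
      ⁅⁅Subgroup.map (QuotientGroup.mk' N) X, Subgroup.map (QuotientGroup.mk' N) Y⁆,
        Subgroup.map (QuotientGroup.mk' N) Z⁆ = ⊥ := by
    intro X Y Z
    rw [← Subgroup.map_commutator, ← Subgroup.map_commutator, Subgroup.map_eq_bot_iff,
      QuotientGroup.ker_mk']
  rw [keyiff] at h1 h2 ⊢
  exact Subgroup.commutator_commutator_eq_bot_of_rotate h1 h2

lemma lcs_comm : ∀ i j : ℕ,
    ⁅Subgroup.lowerCentralSeries (⊤ : Subgroup α) i, Subgroup.lowerCentralSeries (⊤ : Subgroup α) j⁆ ≤ Subgroup.lowerCentralSeries (⊤ : Subgroup α) (i + j + 1) := by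
  intro i
  induction i with
  | zero =>
      intro j
      rw [Subgroup.lowerCentralSeries_zero, Subgroup.commutator_comm]
      rw [show (0:ℕ) + j + 1 = j + 1 from by ring, lcs_succ]
  | succ i ih =>
      intro j
      rw [lcs_succ]
      apply three_subgroups
      · rw [Subgroup.commutator_comm (⊤ : Subgroup α), ← lcs_succ]
        rw [Subgroup.commutator_comm]
        have h := ih (j + 1)
        rwa [show i + (j + 1) + 1 = i + 1 + j + 1 from by ring] at h
      · calc ⁅⁅Subgroup.lowerCentralSeries (⊤ : Subgroup α) j, Subgroup.lowerCentralSeries (⊤ : Subgroup α) i⁆, (⊤ : Subgroup α)⁆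
            ≤ ⁅Subgroup.lowerCentralSeries (⊤ : Subgroup α) (i + j + 1), (⊤ : Subgroup α)⁆ := by
              apply Subgroup.commutator_mono _ le_rfl
              have h := ih j
              rwa [Subgroup.commutator_comm]
          _ = Subgroup.lowerCentralSeries (⊤ : Subgroup α) (i + j + 1 + 1) := (lcs_succ _).symm
          _ = Subgroup.lowerCentralSeries (⊤ : Subgroup α) (i + 1 + j + 1) := by
              rw [show i + j + 1 + 1 = i + 1 + j + 1 from by ring]

lemma pow_p_mem_lcs {p : ℕ} (hab : ∀ g : α, g ^ p ∈ commutator α) :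
    ∀ n : ℕ, ∀ x ∈ Subgroup.lowerCentralSeries (⊤ : Subgroup α) n, x ^ p ∈ Subgroup.lowerCentralSeries (⊤ : Subgroup α) (n + 1) := by
  intro n
  induction n with
  | zero => intro x _; rw [Subgroup.top_lowerCentralSeries_one]; exact hab x
  | succ n ih =>
      intro x hx
      set N := Subgroup.lowerCentralSeries (⊤ : Subgroup α) (n + 2) with hN
      let π : α →* α ⧸ N := QuotientGroup.mk' N
      have hcentral : ∀ y ∈ Subgroup.lowerCentralSeries (⊤ : Subgroup α) (n + 1), π y ∈ Subgroup.center (α ⧸ N) := by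
        intro y hy
        rw [Subgroup.mem_center_iff]
        intro g
        obtain ⟨w, rfl⟩ := QuotientGroup.mk'_surjective N g
        have hc : ⁅y, w⁆ ∈ N := by
          rw [hN, lcs_succ]
          exact Subgroup.commutator_mem_commutator hy (Subgroup.mem_top w)
        have : π ⁅y, w⁆ = 1 := (QuotientGroup.eq_one_iff _).mpr hc
        rw [map_commutatorElement] at this
        have := commutatorElement_eq_one_iff_commute.mp this
        exact this.symm.eq
      -- the set of elements of lcs (n+1) whose image has trivial p-th power is a subgroup
      have main : ∀ z ∈ Subgroup.lowerCentralSeries (⊤ : Subgroup α) (n + 1), (π z) ^ p = 1 := by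
        have hsub : Subgroup.lowerCentralSeries (⊤ : Subgroup α) (n + 1) ≤
            { carrier := {z | z ∈ Subgroup.lowerCentralSeries (⊤ : Subgroup α) (n + 1) ∧ (π z) ^ p = 1}
              one_mem' := ⟨one_mem _, by simp⟩
              mul_mem' := by
                rintro a b ⟨ha1, ha2⟩ ⟨hb1, hb2⟩
                refine ⟨mul_mem ha1 hb1, ?_⟩
                rw [map_mul]
                have hcomm : Commute (π a) (π b) := by
                  have := hcentral a ha1
                  rw [Subgroup.mem_center_iff] at this
                  exact (this (π b)).symm
                rw [hcomm.mul_pow, ha2, hb2, one_mul]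
              inv_mem' := by
                rintro a ⟨ha1, ha2⟩
                exact ⟨inv_mem ha1, by rw [map_inv, inv_pow, ha2, inv_one]⟩ } := by
          conv_lhs => rw [lcs_succ]
          rw [Subgroup.commutator_le]
          intro a ha b _
          refine ⟨Subgroup.commutator_mem_commutator ha (Subgroup.mem_top b), ?_⟩
          -- key computation: (π ⁅a,b⁆)^p = π ⁅a, b^p⁆ ∈ π '' lcs(n+2) = 1
          have hk : ∀ k : ℕ, π ⁅a, b ^ k⁆ = (π ⁅a, b⁆) ^ k := by
            intro k
            induction k with
            | zero => simp
            | succ k ihk =>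
                rw [pow_succ', comm_mul_right, map_mul, map_mul, map_mul]
                have hcent : π ⁅a, b ^ k⁆ ∈ Subgroup.center (α ⧸ N) := by
                  apply hcentral
                  rw [lcs_succ]
                  exact Subgroup.commutator_mem_commutator ha (Subgroup.mem_top _)
                rw [Subgroup.mem_center_iff] at hcent
                have : π b * π ⁅a, b ^ k⁆ * (π b)⁻¹ = π ⁅a, b ^ k⁆ := by
                  rw [hcent (π b)]
                  group
                rw [map_inv, this, ihk, pow_succ']
          have hbp : ⁅a, b ^ p⁆ ∈ N := by
            have h1 : b ^ p ∈ Subgroup.lowerCentralSeries (⊤ : Subgroup α) 1 := by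
              rw [Subgroup.top_lowerCentralSeries_one]; exact hab b
            have h2 : ⁅a, b ^ p⁆ ∈ ⁅Subgroup.lowerCentralSeries (⊤ : Subgroup α) n, Subgroup.lowerCentralSeries (⊤ : Subgroup α) 1⁆ :=
              Subgroup.commutator_mem_commutator ha h1
            exact lcs_comm n 1 h2
          rw [← hk p]
          exact (QuotientGroup.eq_one_iff _).mpr hbp
        intro z hz
        exact (hsub hz).2
      have := main x hx
      rw [← map_pow] at this
      exact (QuotientGroup.eq_one_iff _).mp this


def Dmap (p : ℕ) (A : Type*) [CommGroup A] (w : ZMod p → A) : ZMod p → A :=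
  fun i => (w i)⁻¹ * w (i - 1)

lemma dmap_iter {p : ℕ} {A : Type*} [CommGroup A] (w : ZMod p → A) (m : ℕ) (i : ZMod p) :
    (Dmap p A)^[m] w i
      = ∏ r ∈ Finset.range (m + 1),
          w (i - (r : ℕ)) ^ ((-1 : ℤ) ^ (m + r) * (m.choose r : ℤ)) := by
  induction m generalizing i with
  | zero => simp
  | succ m ih =>
    rw [Function.iterate_succ_apply']
    show ((Dmap p A)^[m] w i)⁻¹ * (Dmap p A)^[m] w (i - 1) = _
    rw [ih i, ih (i - 1)]
    have key : ∀ r : ℕ, (-1:ℤ)^(m+1+(r+1)) * (((m+1).choose (r+1) : ℕ) : ℤ)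
        = (-1:ℤ)^(m+r) * (m.choose r : ℤ) + (-((-1:ℤ)^(m+(r+1)) * (m.choose (r+1) : ℤ))) := by
      intro r
      have h2 : m+1+(r+1) = (m+r)+2 := by ring
      have h3 : m+(r+1) = (m+r)+1 := by ring
      rw [h2, h3, pow_add, pow_add, Nat.choose_succ_succ]
      push_cast
      ring
    conv_rhs => rw [Finset.prod_range_succ']
    have hterm : ∀ r ∈ Finset.range (m+1),
        w (i - ((r+1 : ℕ) : ZMod p)) ^ ((-1:ℤ)^(m+1+(r+1)) * (((m+1).choose (r+1) : ℕ) : ℤ))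
        = w (i - 1 - (r : ℕ)) ^ ((-1:ℤ)^(m+r) * (m.choose r : ℤ))
          * w (i - ((r+1:ℕ) : ZMod p)) ^ (-((-1:ℤ)^(m+(r+1)) * (m.choose (r+1) : ℤ))) := by
      intro r _
      have harg : i - ((r+1:ℕ) : ZMod p) = i - 1 - (r : ℕ) := by push_cast; ring
      rw [key r, zpow_add, harg]
    rw [Finset.prod_congr rfl hterm, Finset.prod_mul_distrib]
    have e0 : (-1:ℤ)^(m+1+0) * (((m+1).choose 0 : ℕ) : ℤ)
        = -((-1:ℤ)^(m+0) * ((m.choose 0 : ℕ) : ℤ)) := by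
      simp only [Nat.add_zero, Nat.choose_zero_right, Nat.cast_one, mul_one, pow_succ]
      ring
    rw [e0]
    have hQ : (∏ r ∈ Finset.range (m+1),
          w (i - ((r+1:ℕ) : ZMod p)) ^ (-((-1:ℤ)^(m+(r+1)) * (m.choose (r+1) : ℤ))))
        * w (i - ((0:ℕ) : ZMod p)) ^ (-((-1:ℤ)^(m+0) * ((m.choose 0 : ℕ) : ℤ)))
        = ∏ r ∈ Finset.range (m+2),
            w (i - (r : ℕ)) ^ (-((-1:ℤ)^(m+r) * (m.choose r : ℤ))) :=
      (Finset.prod_range_succ' (fun r => w (i - (r : ℕ)) ^ (-((-1:ℤ)^(m+r) * (m.choose r : ℤ)))) (m+1)).symm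
    rw [mul_assoc, hQ]
    have hz : ((m.choose (m+1) : ℕ) : ℤ) = 0 := by
      rw [Nat.choose_eq_zero_of_lt (Nat.lt_succ_self m)]; rfl
    have hP1 : ∏ r ∈ Finset.range (m+2), w (i - (r : ℕ)) ^ (-((-1:ℤ)^(m+r) * (m.choose r : ℤ)))
        = (∏ r ∈ Finset.range (m+1), w (i - (r : ℕ)) ^ ((-1:ℤ)^(m+r) * (m.choose r : ℤ)))⁻¹ := by
      rw [Finset.prod_range_succ, hz]
      simp only [mul_zero, neg_zero, zpow_zero, mul_one]
      rw [← Finset.prod_inv_distrib]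
      exact Finset.prod_congr rfl fun r _ => zpow_neg _ _
    rw [hP1, mul_comm]

lemma dmap_iter_p {p : ℕ} [Fact p.Prime] (hp : Odd p) {A : Type*} [CommGroup A]
    (hexp : ∀ a : A, a ^ p = 1) (w : ZMod p → A) (i : ZMod p) :
    (Dmap p A)^[p] w i = 1 := by
  rw [dmap_iter, Finset.prod_range_succ]
  have hlast : w (i - ((p:ℕ) : ZMod p)) ^ ((-1:ℤ)^(p+p) * ((p.choose p : ℕ) : ℤ)) = w i := by
    have h2 : ((p:ℕ) : ZMod p) = 0 := ZMod.natCast_self p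
    have h3 : (-1:ℤ)^(p+p) = 1 := Even.neg_one_pow ⟨p, rfl⟩
    rw [Nat.choose_self, Nat.cast_one, mul_one, h2, sub_zero, h3, zpow_one]
  rw [hlast]
  obtain ⟨q, hq⟩ : ∃ q, p = q + 1 := ⟨p - 1, by have := (Fact.out : p.Prime).one_lt; omega⟩
  rw [show Finset.range p = Finset.range (q+1) from by rw [hq], Finset.prod_range_succ']
  have h0 : w (i - ((0:ℕ) : ZMod p)) ^ ((-1:ℤ)^(p+0) * ((p.choose 0 : ℕ) : ℤ)) = (w i)⁻¹ := by
    simp [Odd.neg_one_pow hp]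
  have hmid : ∀ r ∈ Finset.range q,
      w (i - ((r+1:ℕ) : ZMod p)) ^ ((-1:ℤ)^(p+(r+1)) * ((p.choose (r+1) : ℕ) : ℤ)) = 1 := by
    intro r hr
    have hrq : r + 1 < p := by
      have := Finset.mem_range.mp hr
      omega
    obtain ⟨s, hs⟩ := (Fact.out : p.Prime).dvd_choose_self (Nat.succ_ne_zero r) hrq
    rw [hs]
    have hc : ((-1:ℤ)^(p+(r+1)) * (((p * s : ℕ) : ℕ) : ℤ)) = (p:ℤ) * ((-1:ℤ)^(p+(r+1)) * s) := by
      push_cast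
      ring
    rw [hc, zpow_mul, zpow_natCast, hexp, one_zpow]
  rw [Finset.prod_eq_one hmid, one_mul, h0, inv_mul_cancel]


variable {p : ℕ} [Fact p.Prime] {G : Type*} [Group G]

lemma delta_apply (g : ZMod p → G) (i : ZMod p) :
    Delta p G g i = (g i)⁻¹ * g (i - 1) := by
  simp only [Delta, inlW, sigma, SemidirectProduct.mul_left, SemidirectProduct.inv_left,
    SemidirectProduct.left_inl, SemidirectProduct.right_inl, SemidirectProduct.mul_right,
    SemidirectProduct.inv_right, SemidirectProduct.left_inr, SemidirectProduct.right_inr]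
  simp [shiftAut, sub_eq_add_neg, add_comm]

lemma inl_delta (g : ZMod p → G) :
    inlW p G (Delta p G g)
      = (inlW p G g)⁻¹ * (sigma p G)⁻¹ * inlW p G g * sigma p G := by
  ext
  · rfl
  · simp [sigma, inlW]

lemma inl_delta_comm (g : ZMod p → G) :
    inlW p G (Delta p G g) = ⁅(inlW p G g)⁻¹, (sigma p G)⁻¹⁆ := by
  rw [inl_delta, commutatorElement_def, inv_inv, inv_inv]

lemma sigma_conj_inl (g : ZMod p → G) :
    sigma p G * inlW p G g * (sigma p G)⁻¹ = inlW p G (fun i => g (i + 1)) := by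
  rw [show (fun i => g (i + 1)) = shiftAut p G (Multiplicative.ofAdd (1 : ZMod p)) g from rfl]
  rw [inlW, sigma, SemidirectProduct.inl_aut]
  rw [map_inv]

lemma comm_inl_inl (g h : ZMod p → G) :
    ⁅inlW p G g, inlW p G h⁆ = inlW p G (fun i => ⁅g i, h i⁆) := by
  rw [← map_commutatorElement]; rfl

lemma comm_inl_sigma (g : ZMod p → G) :
    ⁅inlW p G g, sigma p G⁆
      = (inlW p G g * sigma p G) * inlW p G (Delta p G g) * (inlW p G g * sigma p G)⁻¹ := by
  rw [inl_delta, commutatorElement_def]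
  group

lemma delta_shift (g : ZMod p → G) :
    Delta p G (fun i => g (i + 1)) = fun i => Delta p G g (i + 1) := by
  funext i
  rw [delta_apply, delta_apply]
  congr 2
  ring

lemma delta_iter_shift (m : ℕ) (g : ZMod p → G) :
    (Delta p G)^[m] (fun i => g (i + 1)) = fun i => (Delta p G)^[m] g (i + 1) := by
  induction m with
  | zero => rfl
  | succ m ih =>
      rw [Function.iterate_succ_apply', Function.iterate_succ_apply', ih, delta_shift]

lemma delta_mem {H : Subgroup G} {g : ZMod p → G} (hg : ∀ t, g t ∈ H) (t : ZMod p) :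
    Delta p G g t ∈ H := by
  rw [delta_apply]; exact mul_mem (inv_mem (hg t)) (hg _)

lemma delta_iter_mem {H : Subgroup G} (m : ℕ) {g : ZMod p → G} (hg : ∀ t, g t ∈ H)
    (t : ZMod p) : (Delta p G)^[m] g t ∈ H := by
  induction m generalizing t with
  | zero => exact hg t
  | succ m ih => rw [Function.iterate_succ_apply']; exact delta_mem (fun s => ih s) t

lemma sigma_pow_p : (sigma p G) ^ p = 1 := by
  rw [sigma, ← map_pow, ← ofAdd_nsmul]
  have : p • (1 : ZMod p) = 0 := by
    simp [nsmul_eq_mul, ZMod.natCast_self]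
  rw [this]
  simp

lemma sigma_inv_eq : (sigma p G)⁻¹ = (sigma p G) ^ (p - 1) := by
  have hp : 1 ≤ p := (Fact.out : p.Prime).one_lt.le
  have : (sigma p G) ^ (p - 1) * sigma p G = 1 := by
    rw [← pow_succ, Nat.sub_add_cancel hp, sigma_pow_p]
  exact inv_eq_of_mul_eq_one_left this

lemma top_gen :
    (⊤ : Subgroup (W p G)) = closure ({sigma p G} ∪ Set.range (inlW p G)) := by
  refine le_antisymm ?_ le_top
  intro w _
  have h1 : (SemidirectProduct.inl w.left : W p G) ∈ closure ({sigma p G} ∪ Set.range (inlW p G)) :=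
    Subgroup.subset_closure (Or.inr ⟨w.left, rfl⟩)
  have h2 : SemidirectProduct.inr w.right ∈ closure ({sigma p G} ∪ Set.range (inlW p G)) := by
    have hval : ((Multiplicative.toAdd w.right).val : ZMod p) = Multiplicative.toAdd w.right :=
      ZMod.natCast_zmod_val _
    have : SemidirectProduct.inr (φ := shiftAut p G) w.right
        = (sigma p G) ^ (Multiplicative.toAdd w.right).val := by
      rw [sigma, ← map_pow]
      congr 1
      rw [← ofAdd_nsmul]
      simp only [nsmul_eq_mul, mul_one]
      rw [hval]
      rfl
    rw [this]
    have hs : sigma p G ∈ closure ({sigma p G} ∪ Set.range (inlW p G)) :=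
      Subgroup.subset_closure (Set.mem_union_left _ rfl)
    exact pow_mem hs _
  have := mul_mem h1 h2
  rwa [SemidirectProduct.inl_left_mul_inr_right] at this

lemma baseW_eq_ker : baseW p G = (SemidirectProduct.rightHom :
    W p G →* Multiplicative (ZMod p)).ker :=
  SemidirectProduct.range_inl_eq_ker_rightHom

instance baseW_normal : (baseW p G).Normal := by
  rw [baseW_eq_ker]; infer_instance

/-- Extraction: coordinate `t + m` of `Δ^[m]` of a single-supported tuple. -/
lemma delta_iter_single (x : G) :
    ∀ m : ℕ, m < p → ∀ t : ZMod p,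
      ((Delta p G)^[m] (Pi.mulSingle t x) (t + (m : ZMod p)) = x ∧
       ∀ s : ZMod p, (∀ r : ℕ, r ≤ m → s ≠ t + (r : ZMod p)) →
         (Delta p G)^[m] (Pi.mulSingle t x) s = 1) := by
  intro m
  induction m with
  | zero =>
      intro _ t
      constructor
      · simp only [Function.iterate_zero, id_eq, Nat.cast_zero, add_zero, Pi.mulSingle_eq_same]
      · intro s hs
        exact Pi.mulSingle_eq_of_ne (M := fun _ : ZMod p => G) (by simpa using hs 0 le_rfl) x
  | succ m ih =>
      intro hm t
      obtain ⟨ih1, ih2⟩ := ih (lt_trans (Nat.lt_succ_self m) hm) t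
      have hinj : ∀ a b : ℕ, a < p → b < p → (a : ZMod p) = (b : ZMod p) → a = b := by
        intro a b ha hb hab
        have := congrArg ZMod.val hab
        rwa [ZMod.val_natCast_of_lt ha, ZMod.val_natCast_of_lt hb] at this
      constructor
      · rw [Function.iterate_succ_apply', delta_apply]
        have e1 : (Delta p G)^[m] (Pi.mulSingle t x) (t + ((m + 1 : ℕ) : ZMod p)) = 1 := by
          apply ih2
          intro r hr hne
          have : ((m + 1 : ℕ) : ZMod p) = (r : ZMod p) := by
            have := hne
            rwa [add_right_inj] at this
          have := hinj _ _ hm (lt_of_le_of_lt hr (lt_trans (Nat.lt_succ_self m) hm)) this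
          omega
        have e2 : t + ((m + 1 : ℕ) : ZMod p) - 1 = t + (m : ZMod p) := by
          push_cast
          ring
        rw [e2, ih1, e1, inv_one, one_mul]
      · intro s hs
        rw [Function.iterate_succ_apply', delta_apply]
        have e1 : (Delta p G)^[m] (Pi.mulSingle t x) s = 1 :=
          ih2 s fun r hr => hs r (le_trans hr (Nat.le_succ m))
        have e2 : (Delta p G)^[m] (Pi.mulSingle t x) (s - 1) = 1 := by
          apply ih2
          intro r hr hne
          apply hs (r + 1) (by omega)
          calc s = t + (r : ZMod p) + 1 := by rw [← hne]; ring
            _ = t + ((r + 1 : ℕ) : ZMod p) := by push_cast; ring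
        rw [e1, e2, inv_one, one_mul]


lemma delta_iter_p_mem (hp : Odd p) (hab : ∀ g : G, g ^ p ∈ commutator G)
    {n : ℕ} {v : ZMod p → G} (hv : ∀ t, v t ∈ Subgroup.lowerCentralSeries (⊤ : Subgroup G) n) (i : ZMod p) :
    (Delta p G)^[p] v i ∈ Subgroup.lowerCentralSeries (⊤ : Subgroup G) (n + 1) := by
  set L : Subgroup G := Subgroup.lowerCentralSeries (⊤ : Subgroup G) n with hL
  set L' : Subgroup L := (Subgroup.lowerCentralSeries (⊤ : Subgroup G) (n + 1)).subgroupOf L with hL'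
  haveI hnorm : L'.Normal := by rw [hL']; exact Subgroup.normal_subgroupOf
  have hcomm : ∀ a b : L ⧸ L', a * b = b * a := by
    intro a b
    obtain ⟨x, rfl⟩ := QuotientGroup.mk'_surjective L' a
    obtain ⟨y, rfl⟩ := QuotientGroup.mk'_surjective L' b
    have hxy : ⁅x, y⁆ ∈ L' := by
      rw [hL', Subgroup.mem_subgroupOf]
      have h1 : ((⁅x, y⁆ : L) : G) = ⁅(x : G), (y : G)⁆ := rfl
      rw [h1]
      have h2 : ⁅(x : G), (y : G)⁆ ∈ ⁅L, L⁆ := Subgroup.commutator_mem_commutator x.2 y.2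
      have h3 : ⁅L, L⁆ ≤ Subgroup.lowerCentralSeries (⊤ : Subgroup G) (n + 1) := by
        rw [lcs_succ]
        exact Subgroup.commutator_mono le_rfl le_top
      exact h3 h2
    have h1 : QuotientGroup.mk' L' ⁅x, y⁆ = 1 := (QuotientGroup.eq_one_iff _).mpr hxy
    rw [map_commutatorElement] at h1
    exact (commutatorElement_eq_one_iff_commute.mp h1).eq
  letI cg : CommGroup (L ⧸ L') := { (inferInstance : Group (L ⧸ L')) with mul_comm := hcomm }
  let π : L →* L ⧸ L' := QuotientGroup.mk' L'
  have hmem : ∀ (m : ℕ) (t : ZMod p), (Delta p G)^[m] v t ∈ L := fun m t =>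
    delta_iter_mem m hv t
  let w : ZMod p → L ⧸ L' := fun s => π ⟨v s, hv s⟩
  have key : ∀ (m : ℕ) (t : ZMod p),
      π ⟨(Delta p G)^[m] v t, hmem m t⟩ = (Dmap p (L ⧸ L'))^[m] w t := by
    intro m
    induction m with
    | zero => intro t; rfl
    | succ m ih =>
        intro t
        have e1 : (⟨(Delta p G)^[m + 1] v t, hmem (m + 1) t⟩ : L)
            = (⟨(Delta p G)^[m] v t, hmem m t⟩ : L)⁻¹
              * ⟨(Delta p G)^[m] v (t - 1), hmem m (t - 1)⟩ := by
          apply Subtype.ext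
          show (Delta p G)^[m + 1] v t = ((Delta p G)^[m] v t)⁻¹ * (Delta p G)^[m] v (t - 1)
          rw [Function.iterate_succ_apply', delta_apply]
        rw [e1, map_mul, map_inv, ih, ih]
        rw [Function.iterate_succ_apply']
        rfl
  have hexp : ∀ a : L ⧸ L', a ^ p = 1 := by
    intro a
    obtain ⟨x, rfl⟩ := QuotientGroup.mk'_surjective L' a
    rw [← map_pow]
    apply (QuotientGroup.eq_one_iff _).mpr
    rw [hL', Subgroup.mem_subgroupOf]
    have h1 : ((x ^ p : L) : G) = (x : G) ^ p := rfl
    rw [h1]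
    exact pow_p_mem_lcs hab n (x : G) x.2
  have hz := dmap_iter_p hp hexp w i
  rw [← key p i] at hz
  have hfin := (QuotientGroup.eq_one_iff _).mp hz
  rw [hL', Subgroup.mem_subgroupOf] at hfin
  exact hfin


def Vset (p : ℕ) (G : Type*) [Group G] (n : ℕ) : Set (ZMod p → G) :=
  {v | ∀ t, v t ∈ Subgroup.lowerCentralSeries (⊤ : Subgroup G) n}

def CC (p : ℕ) (G : Type*) [Group G] (n m : ℕ) : Subgroup (W p G) :=
  Subgroup.closure (inlW p G '' ((Delta p G)^[m] '' Vset p G n))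
    ⊔ BSub p G (Subgroup.lowerCentralSeries (⊤ : Subgroup G) (n + 1))

lemma CC_def (n m : ℕ) : CC p G n m
    = Subgroup.closure (inlW p G '' ((Delta p G)^[m] '' Vset p G n))
      ⊔ BSub p G (Subgroup.lowerCentralSeries (⊤ : Subgroup G) (n + 1)) := rfl

lemma inl_mem_BSub {H : Subgroup G} {b : ZMod p → G} (hb : ∀ i, b i ∈ H) :
    inlW p G b ∈ BSub p G H :=
  Subgroup.mem_map.mpr ⟨b, (Subgroup.mem_pi _).mpr fun i _ => hb i, rfl⟩

lemma mem_BSub_elim {H : Subgroup G} {x : W p G} (hx : x ∈ BSub p G H) :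
    ∃ c : ZMod p → G, (∀ i, c i ∈ H) ∧ x = inlW p G c := by
  obtain ⟨c, hc, rfl⟩ := Subgroup.mem_map.mp hx
  exact ⟨c, fun i => (Subgroup.mem_pi _).mp hc i (Set.mem_univ i), rfl⟩

lemma BSub_mono {H K : Subgroup G} (h : H ≤ K) : BSub p G H ≤ BSub p G K := by
  intro x hx
  obtain ⟨c, hc, rfl⟩ := mem_BSub_elim hx
  exact inl_mem_BSub fun i => h (hc i)

lemma closure_inl_Vset (n : ℕ) :
    Subgroup.closure (inlW p G '' Vset p G n) = BSub p G (Subgroup.lowerCentralSeries (⊤ : Subgroup G) n) := by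
  have h : Vset p G n = ↑(Subgroup.pi Set.univ fun _ : ZMod p => Subgroup.lowerCentralSeries (⊤ : Subgroup G) n) := by
    ext v
    simp [Vset, Subgroup.mem_pi]
  rw [h, ← Subgroup.coe_map, Subgroup.closure_eq]
  rfl

lemma mulSingle_mem_Vset {x : G} {n : ℕ} (hx : x ∈ Subgroup.lowerCentralSeries (⊤ : Subgroup G) n) (t : ZMod p) :
    Pi.mulSingle t x ∈ Vset p G n := by
  intro s
  by_cases hs : s = t
  · subst hs; rw [Pi.mulSingle_eq_same]; exact hx
  · rw [Pi.mulSingle_eq_of_ne hs]; exact one_mem _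

lemma CC_eq_closure (n m : ℕ) : CC p G n m
    = Subgroup.closure ((inlW p G '' ((Delta p G)^[m] '' Vset p G n))
        ∪ ↑(BSub p G (Subgroup.lowerCentralSeries (⊤ : Subgroup G) (n + 1)))) := by
  rw [Subgroup.closure_union, Subgroup.closure_eq, CC_def]

lemma closure_le_CC (n m : ℕ) :
    Subgroup.closure (inlW p G '' ((Delta p G)^[m] '' Vset p G n)) ≤ CC p G n m := by
  rw [CC_def]; exact le_sup_left

lemma BSub_le_CC (n m : ℕ) :
    BSub p G (Subgroup.lowerCentralSeries (⊤ : Subgroup G) (n + 1)) ≤ CC p G n m := by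
  rw [CC_def]; exact le_sup_right

lemma CC_conj (n m : ℕ) (g : W p G)
    (hgen : ∀ x ∈ (inlW p G '' ((Delta p G)^[m] '' Vset p G n))
        ∪ ↑(BSub p G (Subgroup.lowerCentralSeries (⊤ : Subgroup G) (n + 1))), g * x * g⁻¹ ∈ CC p G n m)
    {h : W p G} (hh : h ∈ CC p G n m) : g * h * g⁻¹ ∈ CC p G n m := by
  rw [CC_eq_closure] at hh
  induction hh using Subgroup.closure_induction with
  | mem x hx => exact hgen x hx
  | one => simpa using one_mem (CC p G n m)
  | mul x y _ _ hx hy =>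
      have e : g * (x * y) * g⁻¹ = (g * x * g⁻¹) * (g * y * g⁻¹) := by group
      rw [e]; exact mul_mem hx hy
  | inv x _ hx =>
      have e : g * x⁻¹ * g⁻¹ = (g * x * g⁻¹)⁻¹ := by group
      rw [e]; exact inv_mem hx

lemma CC_conj_sigma (n m : ℕ) {h : W p G} (hh : h ∈ CC p G n m) :
    sigma p G * h * (sigma p G)⁻¹ ∈ CC p G n m := by
  refine CC_conj n m _ ?_ hh
  rintro x (⟨u, ⟨vv, hvv, rfl⟩, rfl⟩ | hx)
  · rw [sigma_conj_inl]
    exact closure_le_CC n m (Subgroup.subset_closure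
      ⟨fun i => (Delta p G)^[m] vv (i + 1),
        ⟨fun i => vv (i + 1), fun t => hvv _, delta_iter_shift m vv⟩, rfl⟩)
  · obtain ⟨c, hc, rfl⟩ := mem_BSub_elim hx
    rw [sigma_conj_inl]
    exact BSub_le_CC n m (inl_mem_BSub fun i => hc (i + 1))

lemma CC_conj_sigma_inv (n m : ℕ) {h : W p G} (hh : h ∈ CC p G n m) :
    (sigma p G)⁻¹ * h * sigma p G ∈ CC p G n m := by
  have hpow : ∀ (k : ℕ) {h : W p G}, h ∈ CC p G n m →
      (sigma p G) ^ k * h * ((sigma p G) ^ k)⁻¹ ∈ CC p G n m := by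
    intro k
    induction k with
    | zero => intro h hh; simpa using hh
    | succ k ih =>
        intro h hh
        have e : (sigma p G) ^ (k + 1) * h * ((sigma p G) ^ (k + 1))⁻¹
            = sigma p G * ((sigma p G) ^ k * h * ((sigma p G) ^ k)⁻¹) * (sigma p G)⁻¹ := by
          rw [pow_succ']
          group
        rw [e]
        exact CC_conj_sigma n m (ih hh)
  have h1 : (sigma p G)⁻¹ * h * sigma p G
      = (sigma p G) ^ (p - 1) * h * ((sigma p G) ^ (p - 1))⁻¹ := by
    rw [← sigma_inv_eq]
    group
  rw [h1]
  exact hpow (p - 1) hh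

lemma CC_conj_inl (n m : ℕ) (b : ZMod p → G) {h : W p G} (hh : h ∈ CC p G n m) :
    inlW p G b * h * (inlW p G b)⁻¹ ∈ CC p G n m := by
  refine CC_conj n m _ ?_ hh
  rintro x (⟨u, ⟨vv, hvv, rfl⟩, rfl⟩ | hx)
  · have hbu : b * (Delta p G)^[m] vv * b⁻¹
        = (Delta p G)^[m] vv * ⁅((Delta p G)^[m] vv)⁻¹, b⁆ := by
      simp only [commutatorElement_def]
      group
    rw [← map_inv, ← map_mul, ← map_mul, hbu, map_mul]
    apply mul_mem
    · exact closure_le_CC n m (Subgroup.subset_closure ⟨_, ⟨vv, hvv, rfl⟩, rfl⟩)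
    · apply BSub_le_CC n m
      apply inl_mem_BSub
      intro i
      have e : ⁅((Delta p G)^[m] vv)⁻¹, b⁆ i = ⁅(((Delta p G)^[m] vv) i)⁻¹, b i⁆ := rfl
      rw [e, lcs_succ]
      exact Subgroup.commutator_mem_commutator
        (inv_mem (delta_iter_mem m hvv i)) (Subgroup.mem_top _)
  · obtain ⟨c, hc, rfl⟩ := mem_BSub_elim hx
    rw [← map_inv, ← map_mul, ← map_mul]
    apply BSub_le_CC n m
    apply inl_mem_BSub
    intro i
    have e : (b * c * b⁻¹) i = b i * c i * (b i)⁻¹ := rfl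
    rw [e]
    exact (Subgroup.lowerCentralSeries_normal ⊤ (n + 1)).conj_mem _ (hc i) _

instance CC_normal (n m : ℕ) : (CC p G n m).Normal := by
  rw [← Subgroup.normalizer_eq_top_iff, eq_top_iff, top_gen, Subgroup.closure_le]
  intro g hg
  rcases hg with hg | ⟨b, rfl⟩
  · rw [Set.mem_singleton_iff] at hg
    subst hg
    rw [SetLike.mem_coe, Subgroup.mem_normalizer_iff]
    intro h
    constructor
    · exact fun hh => CC_conj_sigma n m hh
    · intro hh
      have h2 := CC_conj_sigma_inv n m hh
      have e : (sigma p G)⁻¹ * (sigma p G * h * (sigma p G)⁻¹) * sigma p G = h := by group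
      rwa [e] at h2
  · rw [SetLike.mem_coe, Subgroup.mem_normalizer_iff]
    intro h
    constructor
    · exact fun hh => CC_conj_inl n m b hh
    · intro hh
      have h2 := CC_conj_inl n m b⁻¹ hh
      rw [map_inv] at h2
      have e : (inlW p G b)⁻¹ * (inlW p G b * h * (inlW p G b)⁻¹) * ((inlW p G b)⁻¹)⁻¹ = h := by
        group
      rwa [e] at h2

lemma forall_comm_iff {K : Subgroup (W p G)} [K.Normal] (x : W p G) :
    (∀ w, ⁅x, w⁆ ∈ K) ↔
      x ∈ Subgroup.comap (QuotientGroup.mk' K) (Subgroup.center ((W p G) ⧸ K)) := by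
  rw [Subgroup.mem_comap, Subgroup.mem_center_iff]
  constructor
  · intro hx g
    obtain ⟨w, rfl⟩ := QuotientGroup.mk'_surjective K g
    have h1 : QuotientGroup.mk' K ⁅x, w⁆ = 1 := (QuotientGroup.eq_one_iff _).mpr (hx w)
    rw [map_commutatorElement] at h1
    exact (commutatorElement_eq_one_iff_commute.mp h1).symm.eq
  · intro hx w
    have h1 : QuotientGroup.mk' K ⁅x, w⁆ = 1 := by
      rw [map_commutatorElement]
      exact commutatorElement_eq_one_iff_commute.mpr ((hx (QuotientGroup.mk' K w)).symm)
    exact (QuotientGroup.eq_one_iff _).mp h1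

lemma step_le (n m : ℕ) : ⁅CC p G n m, (⊤ : Subgroup (W p G))⁆ ≤ CC p G n (m + 1) := by
  set K := CC p G n (m + 1) with hK
  haveI hKn : K.Normal := CC_normal n (m + 1)
  have hred : ∀ x : W p G, ⁅x, sigma p G⁆ ∈ K → (∀ b, ⁅x, inlW p G b⁆ ∈ K) →
      ∀ w, ⁅x, w⁆ ∈ K := by
    intro x h1 h2 w
    have hw : w ∈ Subgroup.closure ({sigma p G} ∪ Set.range (inlW p G)) := by
      rw [← top_gen]; trivial
    induction hw using Subgroup.closure_induction with
    | mem y hy =>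
        rcases hy with hy | ⟨b, rfl⟩
        · rw [Set.mem_singleton_iff] at hy; subst hy; exact h1
        · exact h2 b
    | one => rw [commutatorElement_one_right]; exact one_mem K
    | mul y z _ _ hy hz =>
        rw [comm_mul_right]
        exact mul_mem hy (hKn.conj_mem _ hz y)
    | inv y _ hy =>
        rw [comm_inv_right]
        exact hKn.conj_mem' _ (inv_mem hy) y
  have hcc : CC p G n m ≤
      Subgroup.comap (QuotientGroup.mk' K) (Subgroup.center ((W p G) ⧸ K)) := by
    rw [CC_def, sup_le_iff]
    constructor
    · rw [Subgroup.closure_le]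
      rintro x ⟨u, ⟨vv, hvv, rfl⟩, rfl⟩
      rw [SetLike.mem_coe, ← forall_comm_iff]
      apply hred
      · rw [comm_inl_sigma]
        apply hKn.conj_mem
        rw [← Function.iterate_succ_apply' (Delta p G) m vv]
        exact closure_le_CC n (m + 1) (Subgroup.subset_closure ⟨_, ⟨vv, hvv, rfl⟩, rfl⟩)
      · intro b
        rw [comm_inl_inl]
        apply BSub_le_CC n (m + 1)
        apply inl_mem_BSub
        intro i
        rw [lcs_succ]
        exact Subgroup.commutator_mem_commutator (delta_iter_mem m hvv i) (Subgroup.mem_top _)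
    · intro x hx
      obtain ⟨c, hc, rfl⟩ := mem_BSub_elim hx
      rw [← forall_comm_iff]
      apply hred
      · rw [comm_inl_sigma]
        apply hKn.conj_mem
        exact BSub_le_CC n (m + 1) (inl_mem_BSub fun i => delta_mem hc i)
      · intro b
        rw [comm_inl_inl]
        apply BSub_le_CC n (m + 1)
        apply inl_mem_BSub
        intro i
        apply Subgroup.lowerCentralSeries_antitone _ (Nat.le_succ (n + 1))
        rw [lcs_succ]
        exact Subgroup.commutator_mem_commutator (hc i) (Subgroup.mem_top _)
  rw [Subgroup.commutator_le]
  intro g hg w _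
  exact (forall_comm_iff g).mpr (hcc hg) w

lemma single_mem_step (n m : ℕ) (hm : m < p) (i : ZMod p) :
    ∀ h ∈ Subgroup.lowerCentralSeries (⊤ : Subgroup G) (n + 1),
      inlW p G (Pi.mulSingle i h) ∈ ⁅CC p G n m, (⊤ : Subgroup (W p G))⁆ := by
  have hcomap : Subgroup.lowerCentralSeries (⊤ : Subgroup G) (n + 1) ≤ Subgroup.comap
      ((inlW p G).comp (MonoidHom.mulSingle (fun _ : ZMod p => G) i))
      ⁅CC p G n m, (⊤ : Subgroup (W p G))⁆ := by
    rw [lcs_succ, Subgroup.commutator_le]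
    intro x hx y _
    rw [Subgroup.mem_comap]
    show inlW p G (Pi.mulSingle i ⁅x, y⁆) ∈ _
    have hui : (Delta p G)^[m] (Pi.mulSingle (i - (m : ℕ)) x) i = x := by
      have h1 := (delta_iter_single x m hm (i - (m : ℕ))).1
      rwa [sub_add_cancel] at h1
    have hdecomp : inlW p G (Pi.mulSingle i ⁅x, y⁆)
        = ⁅inlW p G ((Delta p G)^[m] (Pi.mulSingle (i - (m : ℕ)) x)),
            inlW p G (Pi.mulSingle i y)⁆ := by
      rw [comm_inl_inl]
      congr 1
      funext s
      by_cases hs : s = i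
      · subst hs
        rw [Pi.mulSingle_eq_same, Pi.mulSingle_eq_same, hui]
      · rw [Pi.mulSingle_eq_of_ne hs, Pi.mulSingle_eq_of_ne hs, commutatorElement_one_right]
    rw [hdecomp]
    refine Subgroup.commutator_mem_commutator ?_ (Subgroup.mem_top _)
    exact closure_le_CC n m (Subgroup.subset_closure
      ⟨_, ⟨Pi.mulSingle (i - (m : ℕ)) x, mulSingle_mem_Vset hx _, rfl⟩, rfl⟩)
  intro h hh
  exact Subgroup.mem_comap.mp (hcomap hh)

lemma BSub_le_step (n m : ℕ) (hm : m < p) :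
    BSub p G (Subgroup.lowerCentralSeries (⊤ : Subgroup G) (n + 1)) ≤ ⁅CC p G n m, (⊤ : Subgroup (W p G))⁆ := by
  intro x hx
  obtain ⟨c, hc, rfl⟩ := mem_BSub_elim hx
  have hmap := Finset.map_noncommProd Finset.univ (fun i => Pi.mulSingle i (c i))
    (fun i _ j _ _ => Pi.mulSingle_apply_commute c i j) (inlW p G)
  rw [Finset.noncommProd_mulSingle c] at hmap
  rw [hmap]
  apply Subgroup.noncommProd_mem
  intro i _
  exact single_mem_step n m hm i (c i) (hc i)

lemma step_eq (n m : ℕ) (hm : m < p) :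
    ⁅CC p G n m, (⊤ : Subgroup (W p G))⁆ = CC p G n (m + 1) := by
  refine le_antisymm (step_le n m) ?_
  rw [CC_def]
  refine sup_le ?_ (BSub_le_step n m hm)
  rw [Subgroup.closure_le]
  rintro x ⟨u, ⟨vv, hvv, rfl⟩, rfl⟩
  rw [SetLike.mem_coe]
  have e : inlW p G ((Delta p G)^[m + 1] vv)
      = ⁅(inlW p G ((Delta p G)^[m] vv))⁻¹, (sigma p G)⁻¹⁆ := by
    rw [Function.iterate_succ_apply', inl_delta_comm]
  rw [e]
  exact Subgroup.commutator_mem_commutator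
    (inv_mem (closure_le_CC n m (Subgroup.subset_closure ⟨_, ⟨vv, hvv, rfl⟩, rfl⟩)))
    (Subgroup.mem_top _)

lemma CC_p_eq (hp : Odd p) (hab : ∀ g : G, g ^ p ∈ commutator G) (n : ℕ) :
    CC p G n p = CC p G (n + 1) 0 := by
  have h1 : CC p G n p = BSub p G (Subgroup.lowerCentralSeries (⊤ : Subgroup G) (n + 1)) := by
    rw [CC_def]
    refine le_antisymm (sup_le ?_ le_rfl) le_sup_right
    rw [Subgroup.closure_le]
    rintro x ⟨u, ⟨vv, hvv, rfl⟩, rfl⟩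
    exact inl_mem_BSub fun i => delta_iter_p_mem hp hab hvv i
  have h2 : CC p G (n + 1) 0 = BSub p G (Subgroup.lowerCentralSeries (⊤ : Subgroup G) (n + 1)) := by
    rw [CC_def, Function.iterate_zero, Set.image_id, closure_inl_Vset]
    exact sup_eq_left.mpr (BSub_mono (Subgroup.lowerCentralSeries_antitone _ (Nat.le_succ _)))
  rw [h1, h2]


lemma red_gen {K : Subgroup (W p G)} (hKn : K.Normal) (x : W p G)
    (h1 : ⁅x, sigma p G⁆ ∈ K) (h2 : ∀ b, ⁅x, inlW p G b⁆ ∈ K) (w : W p G) : ⁅x, w⁆ ∈ K := by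
  have hw : w ∈ Subgroup.closure ({sigma p G} ∪ Set.range (inlW p G)) := by
    rw [← top_gen]; trivial
  induction hw using Subgroup.closure_induction with
  | mem y hy =>
      rcases hy with hy | ⟨b, rfl⟩
      · rw [Set.mem_singleton_iff] at hy; subst hy; exact h1
      · exact h2 b
  | one => rw [commutatorElement_one_right]; exact one_mem K
  | mul y z _ _ hy hz =>
      rw [comm_mul_right]
      exact mul_mem hy (hKn.conj_mem _ hz y)
  | inv y _ hy =>
      rw [comm_inv_right]
      exact hKn.conj_mem' _ (inv_mem hy) y

lemma BSub_top : BSub p G ⊤ = baseW p G := by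
  have h : BSub p G ⊤ = Subgroup.map (inlW p G) ⊤ := by
    rw [show BSub p G ⊤ = Subgroup.map (inlW p G) (Subgroup.pi Set.univ fun _ => ⊤) from rfl,
      Subgroup.pi_top]
  rw [h, ← MonoidHom.range_eq_map]
  rfl

lemma CC_zero_zero : CC p G 0 0 = baseW p G := by
  rw [CC_def, Function.iterate_zero, Set.image_id, closure_inl_Vset, Subgroup.lowerCentralSeries_zero,
    BSub_top]
  exact sup_eq_left.mpr (BSub_top (p := p) (G := G) ▸ BSub_mono le_top)

lemma gammaStar_eq (hp : Odd p) (hab : ∀ g : G, g ^ p ∈ commutator G) :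
    ∀ N : ℕ, gammaStar p G N = CC p G (N / p) (N % p) := by
  have hppos : 0 < p := (Fact.out : p.Prime).pos
  intro N
  induction N with
  | zero =>
      rw [Nat.zero_div, Nat.zero_mod]
      show baseW p G = CC p G 0 0
      rw [CC_zero_zero]
  | succ N ih =>
      show ⁅gammaStar p G N, ⊤⁆ = _
      rw [ih, step_eq _ _ (Nat.mod_lt N hppos)]
      by_cases hcase : N % p + 1 < p
      · have h1 : (N + 1) / p = N / p ∧ (N + 1) % p = N % p + 1 := by
          rw [Nat.div_mod_unique hppos]
          refine ⟨?_, hcase⟩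
          have hdm := Nat.div_add_mod N p
          calc N % p + 1 + p * (N / p) = p * (N / p) + N % p + 1 := by ring
            _ = N + 1 := by rw [hdm]
        rw [h1.1, h1.2]
      · have hNp : N % p + 1 = p := by
          have := Nat.mod_lt N hppos
          omega
        have h1 : (N + 1) / p = N / p + 1 ∧ (N + 1) % p = 0 := by
          rw [Nat.div_mod_unique hppos]
          refine ⟨?_, hppos⟩
          have hdm := Nat.div_add_mod N p
          calc 0 + p * (N / p + 1) = p * (N / p) + p := by ring
            _ = p * (N / p) + (N % p + 1) := by rw [hNp]
            _ = N + 1 := by rw [← Nat.add_assoc, hdm]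
        rw [h1.1, h1.2, hNp, CC_p_eq hp hab]

lemma lcsW_eq_gammaStar :
    ∀ k : ℕ, Subgroup.lowerCentralSeries (⊤ : Subgroup (W p G)) (k + 1) = gammaStar p G (k + 1) := by
  intro k
  induction k with
  | zero =>
      show ⁅Subgroup.lowerCentralSeries (⊤ : Subgroup (W p G)) 0, ⊤⁆ = ⁅baseW p G, ⊤⁆
      rw [Subgroup.lowerCentralSeries_zero]
      refine le_antisymm ?_ (Subgroup.commutator_mono le_top le_rfl)
      set K := ⁅baseW p G, (⊤ : Subgroup (W p G))⁆ with hK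
      haveI hKn : K.Normal := Subgroup.commutator_normal (baseW p G) ⊤
      have htop : (⊤ : Subgroup (W p G)) ≤
          Subgroup.comap (QuotientGroup.mk' K) (Subgroup.center ((W p G) ⧸ K)) := by
        rw [top_gen, Subgroup.closure_le]
        intro g hg
        rcases hg with hg | ⟨b, rfl⟩
        · rw [Set.mem_singleton_iff] at hg
          subst hg
          rw [SetLike.mem_coe, ← forall_comm_iff]
          apply red_gen hKn
          · have e : ⁅sigma p G, sigma p G⁆ = 1 := by
              rw [commutatorElement_def]; group
            rw [e]; exact one_mem K
          · intro b
            rw [← commutatorElement_inv]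
            exact inv_mem (Subgroup.commutator_mem_commutator ⟨b, rfl⟩ (Subgroup.mem_top _))
        · rw [SetLike.mem_coe, ← forall_comm_iff]
          intro w
          exact Subgroup.commutator_mem_commutator ⟨b, rfl⟩ (Subgroup.mem_top _)
      rw [Subgroup.commutator_le]
      intro g hg w _
      exact (forall_comm_iff g).mpr (htop (Subgroup.mem_top g)) w
  | succ k ih =>
      show ⁅Subgroup.lowerCentralSeries (⊤ : Subgroup (W p G)) (k + 1), ⊤⁆ = ⁅gammaStar p G (k + 1), ⊤⁆
      rw [ih]

end GGS

open GGS

/-- For a finite p-group G of nilpotency class c with elementary abelian abelianisation,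
    writing i = (j−1)p + k with j ≥ 1 and 1 ≤ k ≤ p, one has
    γ_i*(W(G)) = Δ^{k−1}(B(γ_j(G)))·B(γ_{j+1}(G)) (the subgroup generated by the image set
    Δ^{k−1}(B(γ_j(G))) together with B(γ_{j+1}(G))); in particular
    γ_{jp+1}*(W(G)) = B(γ_{j+1}(G)) for every j ≥ 0, and the nilpotency class of W(G) is
    exactly cp.
    (γ_i*(W(G)) = `gammaStar p G (i-1)`, γ_j(G) = `Subgroup.lowerCentralSeries (⊤ : Subgroup G) (j-1)`; the class
    statements are expressed via the lower central series.) -/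
theorem statement14 (p : ℕ) [Fact p.Prime] (hp : Odd p)
    (G : Type*) [Group G] [Fintype G] (hG : IsPGroup p G)
    (c : ℕ) (hc1 : Subgroup.lowerCentralSeries (⊤ : Subgroup G) c = ⊥) (hc2 : Subgroup.lowerCentralSeries (⊤ : Subgroup G) (c - 1) ≠ ⊥)
    (hab : ∀ g : G, g ^ p ∈ commutator G) :
    (∀ j k : ℕ, 1 ≤ j → 1 ≤ k → k ≤ p →
      gammaStar p G ((j - 1) * p + k - 1)
        = Subgroup.closure ((inlW p G) ''
            ((Delta p G)^[k - 1] '' {v : ZMod p → G | ∀ t, v t ∈ Subgroup.lowerCentralSeries (⊤ : Subgroup G) (j - 1)}))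
          ⊔ BSub p G (Subgroup.lowerCentralSeries (⊤ : Subgroup G) j))
    ∧ (∀ j : ℕ, gammaStar p G (j * p) = BSub p G (Subgroup.lowerCentralSeries (⊤ : Subgroup G) j))
    ∧ Subgroup.lowerCentralSeries (⊤ : Subgroup (W p G)) (c * p) = ⊥
    ∧ Subgroup.lowerCentralSeries (⊤ : Subgroup (W p G)) (c * p - 1) ≠ ⊥ := by
  have hpp : p.Prime := Fact.out
  have hppos : 0 < p := hpp.pos
  have main := gammaStar_eq (p := p) (G := G) hp hab
  have hc : 1 ≤ c := by
    by_contra h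
    have hc0 : c = 0 := by omega
    subst hc0
    exact hc2 (by simpa using hc1)
  have hB2 : ∀ j : ℕ, gammaStar p G (j * p) = BSub p G (Subgroup.lowerCentralSeries (⊤ : Subgroup G) j) := by
    intro j
    have hq : (j * p) / p = j ∧ (j * p) % p = 0 := by
      rw [Nat.div_mod_unique hppos]
      exact ⟨by ring, hppos⟩
    rw [main, hq.1, hq.2, CC_def, Function.iterate_zero, Set.image_id, closure_inl_Vset]
    exact sup_eq_left.mpr (BSub_mono (Subgroup.lowerCentralSeries_antitone _ (Nat.le_succ _)))
  refine ⟨?_, hB2, ?_, ?_⟩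
  · intro j k hj hk hkp
    have hidx : (j - 1) * p + k - 1 = (j - 1) * p + (k - 1) := by omega
    rw [hidx, main]
    have hq : ((j - 1) * p + (k - 1)) / p = j - 1 ∧ ((j - 1) * p + (k - 1)) % p = k - 1 := by
      rw [Nat.div_mod_unique hppos]
      exact ⟨by ring, by omega⟩
    rw [hq.1, hq.2, CC_def, Nat.sub_add_cancel hj]
    rfl
  · obtain ⟨d, hd⟩ : ∃ d, c * p = d + 1 := by
      have h1 : 1 * 1 ≤ c * p := Nat.mul_le_mul hc hppos
      exact ⟨c * p - 1, by omega⟩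
    have h2 := hB2 c
    rw [hd] at h2 ⊢
    rw [lcsW_eq_gammaStar, h2, hc1]
    show Subgroup.map (inlW p G) (Subgroup.pi Set.univ fun _ => ⊥) = ⊥
    rw [Subgroup.pi_bot, Subgroup.map_bot]
  · obtain ⟨x, hxmem, hx1⟩ : ∃ x ∈ Subgroup.lowerCentralSeries (⊤ : Subgroup G) (c - 1), x ≠ 1 := by
      by_contra h
      push_neg at h
      exact hc2 ((Subgroup.eq_bot_iff_forall _).mpr h)
    intro hbot
    have hidx : c * p - 1 = (c - 1) * p + (p - 1) := by
      obtain ⟨c', rfl⟩ : ∃ c', c = 1 + c' := ⟨c - 1, by omega⟩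
      have h1 : (1 + c') * p = p + c' * p := by ring
      have h2 : 1 + c' - 1 = c' := by omega
      rw [h1, h2]
      omega
    have h2le : 2 ≤ c * p := le_trans hpp.two_le (Nat.le_mul_of_pos_left p hc)
    obtain ⟨e, he⟩ : ∃ e, c * p - 1 = e + 1 := ⟨c * p - 2, by omega⟩
    rw [he, lcsW_eq_gammaStar, ← he, hidx, main] at hbot
    have hq : ((c - 1) * p + (p - 1)) / p = c - 1 ∧ ((c - 1) * p + (p - 1)) % p = p - 1 := by
      rw [Nat.div_mod_unique hppos]
      exact ⟨by ring, by omega⟩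
    rw [hq.1, hq.2] at hbot
    have hmem : inlW p G ((Delta p G)^[p - 1] (Pi.mulSingle (0 : ZMod p) x))
        ∈ CC p G (c - 1) (p - 1) :=
      closure_le_CC _ _ (Subgroup.subset_closure
        ⟨_, ⟨_, mulSingle_mem_Vset hxmem (0 : ZMod p), rfl⟩, rfl⟩)
    rw [hbot, Subgroup.mem_bot] at hmem
    have hone : (Delta p G)^[p - 1] (Pi.mulSingle (0 : ZMod p) x) = 1 := by
      apply SemidirectProduct.inl_injective (φ := shiftAut p G)
      rw [map_one]
      exact hmem
    have hcoord := (delta_iter_single x (p - 1) (by omega) (0 : ZMod p)).1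
    apply hx1
    rw [← hcoord, hone]
    rfl
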